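/- For every d ≥ 2 and every n ≥ 128, λ_d(n) ≤ ⌊√(n/2)⌋. -/

import Mathlib

/-- `fstar f n = min {i : f^(i)(n) ≤ 1}`. -/
noncomputable def fstar (f : ℕ → ℕ) (n : ℕ) : ℕ := sInf {i | f^[i] n ≤ 1}

/-- The inverse-Ackermann-type functions: `lam 1 n = ⌊√n⌋`, `lam 2 n = ⌈log₂ n⌉`,
`lam (d) = (lam (d-2))*` for `d ≥ 3`. -/
noncomputable def lam : ℕ → ℕ → ℕ
  | 0 => fun _ => 0
  | 1 => Nat.sqrt
  | 2 => Nat.clog 2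
  | d + 3 => fstar (lam (d + 1))

lemma iter_stay (f : ℕ → ℕ) (h0 : f 0 ≤ 1) (h1 : f 1 ≤ 1) :
    ∀ k n, n ≤ 1 → f^[k] n ≤ 1 := by
  intro k
  induction k with
  | zero => intro n hn; simpa using hn
  | succ k ih =>
    intro n hn
    rw [Function.iterate_succ_apply]
    apply ih
    interval_cases n <;> assumption

lemma two_mul_le_pow : ∀ q, 1 ≤ q → 2 * q ≤ 2 ^ q := by
  intro q
  induction q with
  | zero => omega
  | succ q ih =>
    intro _
    rcases Nat.eq_or_lt_of_le (Nat.zero_le q) with h | h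
    · simp [← h]
    · have := ih h
      have : 2 ^ q ≥ 2 := by
        calc 2 = 2 * 1 := rfl
        _ ≤ 2 * q := by omega
        _ ≤ 2 ^ q := by omega
      rw [pow_succ]
      omega

lemma sqrt_half : ∀ m, 2 ≤ m → Nat.sqrt m ≤ (m + 1) / 2 := by
  intro m hm
  have h : Nat.sqrt m < (m + 1) / 2 + 1 := by
    rw [Nat.sqrt_lt]
    have hq : 1 ≤ (m + 1) / 2 := by omega
    have hm2 : m ≤ 2 * ((m + 1) / 2) := by omega
    nlinarith [hq, hm2]
  omega

lemma clog_half : ∀ m, 2 ≤ m → Nat.clog 2 m ≤ (m + 1) / 2 := by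
  intro m hm
  rw [Nat.clog_le_iff_le_pow one_lt_two]
  have hq : 1 ≤ (m + 1) / 2 := by omega
  have := two_mul_le_pow _ hq
  omega

lemma L1 (f : ℕ → ℕ) (h0 : f 0 ≤ 1) (h1 : f 1 ≤ 1)
    (hf : ∀ m, 2 ≤ m → f m ≤ (m + 1) / 2) :
    ∀ k n, Nat.clog 2 n ≤ k → f^[k] n ≤ 1 := by
  intro k
  induction k with
  | zero =>
    intro n hn
    have : n ≤ 2 ^ 0 := (Nat.clog_le_iff_le_pow one_lt_two).1 hn
    simpa using this
  | succ k ih =>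
    intro n hn
    by_cases h2 : n ≤ 1
    · exact iter_stay f h0 h1 _ n h2
    · push_neg at h2
      rw [Function.iterate_succ_apply]
      apply ih
      rw [Nat.clog_le_iff_le_pow one_lt_two]
      have hn' : n ≤ 2 ^ (k + 1) := (Nat.clog_le_iff_le_pow one_lt_two).1 hn
      have := hf n h2
      rw [pow_succ] at hn'
      omega

lemma lam_le_one (d : ℕ) : lam d 0 ≤ 1 ∧ lam d 1 ≤ 1 := by
  match d with
  | 0 => simp [lam]
  | 1 => simp [lam]
  | 2 => simp [lam]
  | e + 3 =>
    constructor
    · have : sInf {i | (lam (e+1))^[i] 0 ≤ 1} ≤ 0 := Nat.sInf_le (by simp)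
      show fstar (lam (e+1)) 0 ≤ 1
      unfold fstar
      omega
    · have : sInf {i | (lam (e+1))^[i] 1 ≤ 1} ≤ 0 := Nat.sInf_le (by simp)
      show fstar (lam (e+1)) 1 ≤ 1
      unfold fstar
      omega

lemma L2 : ∀ d, 2 ≤ d → ∀ n, lam d n ≤ Nat.clog 2 n := by
  intro d
  induction d using Nat.strong_induction_on with
  | _ d ih =>
    match d with
    | 0 => omega
    | 1 => omega
    | 2 => intro _ n; simp [lam]
    | e + 3 =>
      intro _ n
      show fstar (lam (e + 1)) n ≤ Nat.clog 2 n
      have h0 := (lam_le_one (e + 1)).1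
      have h1 := (lam_le_one (e + 1)).2
      have hf : ∀ m, 2 ≤ m → lam (e + 1) m ≤ (m + 1) / 2 := by
        intro m hm
        match e with
        | 0 => exact sqrt_half m hm
        | e' + 1 =>
          show lam (e' + 2) m ≤ (m + 1) / 2
          have := ih (e' + 2) (by omega) (by omega) m
          have := clog_half m hm
          omega
      exact Nat.sInf_le (L1 (lam (e + 1)) h0 h1 hf (Nat.clog 2 n) n le_rfl)

lemma pow_helper : ∀ j : ℕ, (j + 8) * (j + 8) * 2 ≤ 2 ^ (j + 7) := by
  intro j
  induction j with
  | zero => norm_num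
  | succ j ih =>
    rw [pow_succ]
    nlinarith [ih]

theorem stmt_19 : ∀ d : ℕ, 2 ≤ d → ∀ n : ℕ, 128 ≤ n →
    lam d n ≤ Nat.sqrt (n / 2) := by
  intro d hd n hn
  have h1 : lam d n ≤ Nat.clog 2 n := L2 d hd n
  set k := Nat.clog 2 n with hk
  have h2 : k * k * 2 ≤ n := by
    by_cases hk7 : k ≤ 7
    · nlinarith
    · push_neg at hk7
      have hgt : 2 ^ (k - 1) < n := by
        by_contra h
        push_neg at h
        have := (Nat.clog_le_iff_le_pow one_lt_two).2 h
        omega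
      have := pow_helper (k - 8)
      have hkk : k - 8 + 8 = k := by omega
      have hkk' : k - 8 + 7 = k - 1 := by omega
      rw [hkk, hkk'] at this
      omega
  have h3 : k ≤ Nat.sqrt (n / 2) := by
    rw [Nat.le_sqrt, Nat.le_div_iff_mul_le (by norm_num : 0 < 2)]
    exact h2
  omega
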